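/- Fix d ≥ 2 and set n₁ = 2 and n_{i+1} = 2nᵢ − 1 for i = 1,…,d−1. Consider the bias architecture with layer widths k₁ = 2, k₂, …, k_d, input B₁ = I₂ (the 2×2 identity), layers B_{i+1} = relu(Mᵢ Bᵢ Cᵢ + 𝟙 aᵢᵀ) with Cᵢ ∈ ℝ^{kᵢ×k_{i+1}} and aᵢ ∈ ℝ^{k_{i+1}}, and output G(C,a) = B_d c_d + a_d 𝟙 with c_d ∈ ℝ^{k_d} and a_d ∈ ℝ. Then for every discrete s-piecewise linear vector x ∈ ℝ^{n_d} there exist layer widths k₂,…,k_d and parameters (C₁,…,C_{d−1}, a₁,…,a_{d−1}, c_d, a_d) having at most s(d+1) + 1 non-zero entries in total, such that G(C,a) = x. -/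

import Mathlib

open Matrix Finset

/-- Entrywise ReLU of a matrix. -/
def reluM {ι κ : Type*} (A : Matrix ι κ ℝ) : Matrix ι κ ℝ :=
  Matrix.of fun i j => max (A i j) 0

/-- The linear-interpolation upsampling matrix `Mᵢ : ℝ^{nᵢ} → ℝ^{2nᵢ − 1}` for the dimensions
`nᵢ = 2^i + 1` (0-indexed; the paper's `n₁ = 2` is `n 0 = 2^0 + 1`, and `n_{i+1} = 2nᵢ − 1`
becomes `2^{i+1} + 1 = 2(2^i + 1) − 1`).  In 0-based coordinates, `(M v)_{2j} = v_j` and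
`(M v)_{2j+1} = (v_j + v_{j+1})/2`. -/
noncomputable def Mup (i : ℕ) : Matrix (Fin (2 ^ (i + 1) + 1)) (Fin (2 ^ i + 1)) ℝ :=
  Matrix.of fun r j =>
    if (r : ℕ) = 2 * (j : ℕ) then 1
    else if (r : ℕ) = 2 * (j : ℕ) + 1 ∨ (r : ℕ) + 1 = 2 * (j : ℕ) then (1 / 2 : ℝ)
    else 0

/-- `x ∈ ℝ^n` is a discrete `s`-piecewise linear function: there are 0-based indices
`0 = q₀ < q₁ < ⋯ < q_s = n − 1` and slopes `β₁, …, β_s` such that on each segment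
`q_{j-1} ≤ i ≤ q_j` one has `x_i = x_{q_{j-1}} + β_j (i − q_{j-1})`. -/
def IsPWL (n s : ℕ) (x : Fin n → ℝ) : Prop :=
  ∃ (q : ℕ → ℕ) (β : ℕ → ℝ),
    q 0 = 0 ∧ q s = n - 1 ∧ (∀ j, j < s → q j < q (j + 1)) ∧
    ∀ j, j < s → ∀ i, q j ≤ i → i ≤ q (j + 1) →
      ∀ (hi : i < n) (hq : q j < n),
        x ⟨i, hi⟩ = x ⟨q j, hq⟩ + β j * ((i : ℝ) - (q j : ℝ))

/-- Every discrete `s`-piecewise linear vector `x ∈ ℝ^{n_d}` (here `n_d =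
2^{d-1} + 1`, layers 0-indexed so the input is `B 0 = I₂` and the output uses `B (d-1)`) can be
represented exactly by the bias architecture `B_{i+1} = relu(Mᵢ Bᵢ Cᵢ + 𝟙 aᵢᵀ)`,
`G(C, a) = B_d c_d + a_d 𝟙`, for suitable layer widths and parameters with at most
`s(d+1) + 1` non-zero entries in total. -/
lemma mup_ramp (i : ℕ) (α : ℝ) (r : Fin (2 ^ (i + 1) + 1)) :
    ∑ c : Fin (2 ^ i + 1), Mup i r c * (α * ((c : ℕ) : ℝ)) = α * ((r : ℕ) : ℝ) / 2 := by
  rcases Nat.even_or_odd (r : ℕ) with ⟨m, hm⟩ | ⟨m, hm⟩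
  · have hmlt : m < 2 ^ i + 1 := by
      have := r.isLt
      omega
    rw [Finset.sum_eq_single (⟨m, hmlt⟩ : Fin (2 ^ i + 1))]
    · have h1 : (r : ℕ) = 2 * m := by omega
      simp only [Mup, Matrix.of_apply, h1]
      simp only [if_true]
      push_cast
      ring
    · intro b _ hb
      have hbv : (b : ℕ) ≠ m := fun h => hb (Fin.ext h)
      have h1 : (r : ℕ) ≠ 2 * (b : ℕ) := by omega
      have h2 : ¬((r : ℕ) = 2 * (b : ℕ) + 1 ∨ (r : ℕ) + 1 = 2 * (b : ℕ)) := by omega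
      simp only [Mup, Matrix.of_apply, if_neg h1, if_neg h2, zero_mul]
    · intro h; exact absurd (Finset.mem_univ _) h
  · have hmlt : m + 1 < 2 ^ i + 1 := by
      have := r.isLt
      omega
    have hab : (⟨m, by omega⟩ : Fin (2 ^ i + 1)) ≠ ⟨m + 1, hmlt⟩ :=
      by simp
    have hsub : ∑ c : Fin (2 ^ i + 1), Mup i r c * (α * ((c : ℕ) : ℝ))
        = ∑ c ∈ ({⟨m, by omega⟩, ⟨m + 1, hmlt⟩} : Finset (Fin (2 ^ i + 1))),
            Mup i r c * (α * ((c : ℕ) : ℝ)) := by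
      refine (Finset.sum_subset (Finset.subset_univ _) ?_).symm
      intro b _ hb
      simp only [Finset.mem_insert, Finset.mem_singleton] at hb
      push_neg at hb
      have hb1 : (b : ℕ) ≠ m := fun h => hb.1 (Fin.ext h)
      have hb2 : (b : ℕ) ≠ m + 1 := fun h => hb.2 (Fin.ext h)
      have h1 : (r : ℕ) ≠ 2 * (b : ℕ) := by omega
      have h2 : ¬((r : ℕ) = 2 * (b : ℕ) + 1 ∨ (r : ℕ) + 1 = 2 * (b : ℕ)) := by omega
      simp only [Mup, Matrix.of_apply, if_neg h1, if_neg h2, zero_mul]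
    rw [hsub, Finset.sum_pair hab]
    have e1 : Mup i r ⟨m, by omega⟩ = 1 / 2 := by
      simp only [Mup, Matrix.of_apply]
      rw [if_neg (by omega), if_pos (by omega)]
    have e2 : Mup i r ⟨m + 1, hmlt⟩ = 1 / 2 := by
      simp only [Mup, Matrix.of_apply]
      rw [if_neg (by omega), if_pos (by omega)]
    rw [e1, e2]
    have : ((r : ℕ) : ℝ) = 2 * (m : ℝ) + 1 := by push_cast [hm]; ring
    rw [this]
    push_cast
    ring

/-- Layer widths. -/
def kk (d s : ℕ) : ℕ → ℕ := fun i => if i = 0 then 2 else if i < d - 1 then 1 else s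

/-- Weight matrices. -/
noncomputable def CC (d s : ℕ) (i : ℕ) : Matrix (Fin (kk d s i)) (Fin (kk d s (i + 1))) ℝ :=
  Matrix.of fun p _ =>
    if i < d - 1 ∧ (p : ℕ) = (if i = 0 then 1 else 0) then
      (if i + 1 = d - 1 then (2 : ℝ) ^ (d - 1) else 1) else 0

/-- Bias vectors. -/
noncomputable def aa (d s : ℕ) (q : ℕ → ℕ) (i : ℕ) : Fin (kk d s (i + 1)) → ℝ :=
  fun j => if i + 1 = d - 1 then -((q (j : ℕ) : ℕ) : ℝ) else 0

/-- Layer activations. -/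
noncomputable def BB (d s : ℕ) (q : ℕ → ℕ) (i : ℕ) :
    Matrix (Fin (2 ^ i + 1)) (Fin (kk d s i)) ℝ :=
  Matrix.of fun r c =>
    if i = 0 then (if (r : ℕ) = (c : ℕ) then 1 else 0)
    else if i < d - 1 then ((r : ℕ) : ℝ) / 2 ^ i
    else max (((r : ℕ) : ℝ) - ((q (c : ℕ) : ℕ) : ℝ)) 0

lemma BB_rec (d s : ℕ) (hd : 2 ≤ d) (q : ℕ → ℕ) (i : ℕ) (hi : i < d - 1) :
    BB d s q (i + 1) =
      reluM (Mup i * BB d s q i * CC d s i + Matrix.of fun _ j => aa d s q i j) := by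
  set v : ℝ := if i + 1 = d - 1 then (2 : ℝ) ^ (d - 1) else 1 with hv
  have hlt : (if i = 0 then 1 else 0) < kk d s i := by
    unfold kk; split_ifs <;> omega
  ext r j
  have hBC : ∀ c : Fin (2 ^ i + 1),
      (BB d s q i * CC d s i) c j = (v / 2 ^ i) * ((c : ℕ) : ℝ) := by
    intro c
    rw [Matrix.mul_apply]
    rw [Finset.sum_eq_single (⟨if i = 0 then 1 else 0, hlt⟩ : Fin (kk d s i))]
    · have hval : ((⟨if i = 0 then 1 else 0, hlt⟩ : Fin (kk d s i)) : ℕ)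
          = if i = 0 then 1 else 0 := rfl
      have hC : CC d s i ⟨if i = 0 then 1 else 0, hlt⟩ j = v := by
        simp only [CC, Matrix.of_apply, hv]
        rw [if_pos ⟨hi, trivial⟩]
      have hB : BB d s q i c ⟨if i = 0 then 1 else 0, hlt⟩ = ((c : ℕ) : ℝ) / 2 ^ i := by
        rcases Nat.eq_zero_or_pos i with rfl | hip
        · have hc2 : (c : ℕ) < 2 := by simpa using c.isLt
          have hval0 : ((⟨if (0:ℕ) = 0 then 1 else 0, hlt⟩ : Fin (kk d s 0)) : ℕ) = 1 := rfl
          simp only [BB, Matrix.of_apply, if_pos rfl, hval0, pow_zero]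
          interval_cases h : (c : ℕ) <;> norm_num
        · simp only [BB, Matrix.of_apply, if_neg (by omega : ¬ i = 0), if_pos hi]
      rw [hB, hC]; ring
    · intro b _ hb
      have hbv : (b : ℕ) ≠ (if i = 0 then 1 else 0) := fun h => hb (Fin.ext h)
      simp [CC, hbv]
    · intro h; exact absurd (Finset.mem_univ _) h
  rw [Matrix.mul_assoc]
  show BB d s q (i + 1) r j
      = max ((Mup i * (BB d s q i * CC d s i)) r j + aa d s q i j) 0
  rw [Matrix.mul_apply]
  have hsum : ∑ c, Mup i r c * (BB d s q i * CC d s i) c j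
      = (v / 2 ^ i) * ((r : ℕ) : ℝ) / 2 := by
    simp_rw [hBC]
    exact mup_ramp i (v / 2 ^ i) r
  rw [hsum]
  have h2i : (2 : ℝ) ^ i ≠ 0 := by positivity
  by_cases hN : i + 1 = d - 1
  · have hvv : v = (2 : ℝ) ^ (i + 1) := by rw [hv, if_pos hN, ← hN]
    have haa : aa d s q i j = -((q (j : ℕ) : ℕ) : ℝ) := by simp [aa, hN]
    have hBend : BB d s q (i + 1) r j
        = max (((r : ℕ) : ℝ) - ((q (j : ℕ) : ℕ) : ℝ)) 0 := by
      simp only [BB, Matrix.of_apply, if_neg (by omega : ¬ i + 1 = 0),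
        if_neg (by omega : ¬ i + 1 < d - 1)]
    rw [hBend, haa, hvv]
    congr 1
    field_simp
    ring
  · have hvv : v = 1 := by rw [hv, if_neg hN]
    have haa : aa d s q i j = 0 := by simp [aa, hN]
    have hBmid : BB d s q (i + 1) r j = ((r : ℕ) : ℝ) / 2 ^ (i + 1) := by
      simp only [BB, Matrix.of_apply, if_neg (by omega : ¬ i + 1 = 0),
        if_pos (by omega : i + 1 < d - 1)]
    rw [hBmid, haa, hvv, add_zero]
    rw [max_eq_left (by positivity)]
    ring

set_option maxHeartbeats 1000000 in
theorem deep_decoder_represents_piecewise_linear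
    (d s : ℕ) (hd : 2 ≤ d) (x : Fin (2 ^ (d - 1) + 1) → ℝ)
    (hx : IsPWL (2 ^ (d - 1) + 1) s x) :
    ∃ (k : ℕ → ℕ), k 0 = 2 ∧
    ∃ (C : ∀ i : ℕ, Matrix (Fin (k i)) (Fin (k (i + 1))) ℝ)
      (a : ∀ i : ℕ, Fin (k (i + 1)) → ℝ)
      (cd : Fin (k (d - 1)) → ℝ) (ad : ℝ)
      (B : ∀ i : ℕ, Matrix (Fin (2 ^ i + 1)) (Fin (k i)) ℝ),
      (∀ p q, B 0 p q = if (p : ℕ) = (q : ℕ) then 1 else 0) ∧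
      (∀ i, i < d - 1 →
        B (i + 1) = reluM (Mup i * B i * C i + Matrix.of fun _ q => a i q)) ∧
      ((∑ i ∈ Finset.range (d - 1),
          (((Finset.univ.filter fun p : Fin (k i) × Fin (k (i + 1)) => C i p.1 p.2 ≠ 0).card)
            + ((Finset.univ.filter fun q : Fin (k (i + 1)) => a i q ≠ 0).card)))
        + ((Finset.univ.filter fun q : Fin (k (d - 1)) => cd q ≠ 0).card)
        + (if ad ≠ 0 then 1 else 0) ≤ s * (d + 1) + 1) ∧
      (B (d - 1) *ᵥ cd + fun _ => ad) = x := by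
  obtain ⟨q, β, hq0, hqs, hqlt, hseg⟩ := hx
  have hpow : 0 < 2 ^ (d - 1) := Nat.pow_pos (by norm_num)
  have hqs' : q s = 2 ^ (d - 1) := hqs.trans (by simp)
  have hs : 1 ≤ s := by
    rcases Nat.eq_zero_or_pos s with h | h
    · rw [h, hq0] at hqs'; exact absurd hqs'.symm hpow.ne'
    · exact h
  have hq_mono : ∀ a b, a ≤ b → b ≤ s → q a ≤ q b := by
    intro a b hab hbs
    induction b with
    | zero =>
        have : a = 0 := by omega
        rw [this]
    | succ n ih =>
        rcases Nat.lt_or_ge a (n + 1) with h | h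
        · exact le_trans (ih (by omega) (by omega)) (le_of_lt (hqlt n (by omega)))
        · have : a = n + 1 := by omega
          rw [this]
  have hqub : ∀ m, m ≤ s → q m ≤ 2 ^ (d - 1) := fun m hm =>
    hqs' ▸ hq_mono m s hm le_rfl
  -- a total version of x
  obtain ⟨x', hx'⟩ : ∃ x' : ℕ → ℝ, ∀ i (h : i < 2 ^ (d - 1) + 1), x' i = x ⟨i, h⟩ :=
    ⟨fun i => if h : i < 2 ^ (d - 1) + 1 then x ⟨i, h⟩ else 0, fun i h => dif_pos h⟩
  have hseg' : ∀ j, j < s → ∀ i, q j ≤ i → i ≤ q (j + 1) →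
      x' i = x' (q j) + β j * ((i : ℝ) - (q j : ℝ)) := by
    intro j hj i h1 h2
    have hin : i < 2 ^ (d - 1) + 1 := by
      have := (h2.trans (hqub (j + 1) (by omega))); omega
    have hqn : q j < 2 ^ (d - 1) + 1 := by have := hqub j (by omega); omega
    rw [hx' i hin, hx' (q j) hqn]
    exact hseg j hj i h1 h2 hin hqn
  -- the hinge coefficients
  set γ : ℕ → ℝ := fun j => if j = 0 then β 0 else β j - β (j - 1) with hγ
  have key : ∀ m, m < s → ∀ r : ℝ,
      x' 0 + ∑ j ∈ Finset.range (m + 1), γ j * (r - (q j : ℕ)) =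
        x' (q m) + β m * (r - (q m : ℕ)) := by
    intro m
    induction m with
    | zero =>
        intro _ r
        simp [hγ, hq0]
    | succ n ih =>
        intro hm r
        have ihr := ih (by omega) r
        have hseg2 := hseg' n (by omega) (q (n + 1)) (le_of_lt (hqlt n (by omega))) le_rfl
        rw [Finset.sum_range_succ, hseg2]
        have hγn : γ (n + 1) = β (n + 1) - β n := by simp [hγ]
        rw [hγn]
        linear_combination ihr
  have final : ∀ i : ℕ, i ≤ 2 ^ (d - 1) →
      x' i = x' 0 + ∑ t ∈ Finset.range s, max ((i : ℝ) - (q t : ℕ)) 0 * γ t := by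
    intro i hi
    obtain ⟨m, hm, h1, h2⟩ : ∃ m, m < s ∧ q m ≤ i ∧ i ≤ q (m + 1) := by
      have hP0 : q 0 ≤ i := by omega
      have hFle : Nat.findGreatest (fun j => q j ≤ i) (s - 1) ≤ s - 1 :=
        Nat.findGreatest_le _
      have hFspec : q (Nat.findGreatest (fun j => q j ≤ i) (s - 1)) ≤ i :=
        Nat.findGreatest_spec (P := fun j => q j ≤ i) (m := 0) (Nat.zero_le _) hP0
      refine ⟨Nat.findGreatest (fun j => q j ≤ i) (s - 1), by omega, hFspec, ?_⟩
      rcases Nat.lt_or_ge (Nat.findGreatest (fun j => q j ≤ i) (s - 1)) (s - 1) with h | h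
      · have hngt : ¬ q (Nat.findGreatest (fun j => q j ≤ i) (s - 1) + 1) ≤ i :=
          Nat.findGreatest_is_greatest (P := fun j => q j ≤ i) (n := s - 1)
            (k := Nat.findGreatest (fun j => q j ≤ i) (s - 1) + 1)
            (Nat.lt_succ_self _) (by omega)
        omega
      · have he : Nat.findGreatest (fun j => q j ≤ i) (s - 1) = s - 1 :=
          le_antisymm hFle h
        rw [he, show s - 1 + 1 = s by omega, hqs']
        exact hi
    have hxi : x' i = x' 0 + ∑ j ∈ Finset.range (m + 1), γ j * ((i : ℝ) - (q j : ℕ)) := by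
      rw [key m hm (i : ℝ)]
      exact hseg' m hm i h1 h2
    rw [hxi]
    congr 1
    rw [← Finset.sum_range_add_sum_Ico _ (show m + 1 ≤ s by omega)]
    have hz : ∑ t ∈ Finset.Ico (m + 1) s, max ((i : ℝ) - (q t : ℕ)) 0 * γ t = 0 := by
      refine Finset.sum_eq_zero fun t ht => ?_
      rw [Finset.mem_Ico] at ht
      have : i ≤ q t := h2.trans (hq_mono (m + 1) t ht.1 (by omega))
      have : max ((i : ℝ) - (q t : ℕ)) 0 = 0 :=
        max_eq_right (by simp; exact_mod_cast this)
      rw [this, zero_mul]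
    rw [hz, add_zero]
    refine Finset.sum_congr rfl fun t ht => ?_
    rw [Finset.mem_range] at ht
    have : q t ≤ i := (hq_mono t m (by omega) (by omega)).trans h1
    have hmax : max ((i : ℝ) - (q t : ℕ)) 0 = (i : ℝ) - (q t : ℕ) :=
      max_eq_left (by simp; exact_mod_cast this)
    rw [hmax]; ring
  -- assemble the network
  have hkN : kk d s (d - 1) = s := by unfold kk; rw [if_neg (by omega), if_neg (by omega)]
  refine ⟨kk d s, rfl, CC d s, aa d s q, fun j => γ (j : ℕ), x' 0, BB d s q, ?_, ?_, ?_, ?_⟩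
  · intro p q'
    simp [BB]
  · intro i hi
    exact BB_rec d s hd q i hi
  · -- sparsity count
    have hk1 : ∀ i, i < d - 1 → kk d s (i + 1) = (if i + 1 = d - 1 then s else 1) := by
      intro i hi
      unfold kk
      rw [if_neg (by omega : ¬ i + 1 = 0)]
      split_ifs <;> omega
    have hCcard : ∀ i, i < d - 1 →
        (Finset.univ.filter fun p : Fin (kk d s i) × Fin (kk d s (i + 1)) =>
          CC d s i p.1 p.2 ≠ 0).card ≤ kk d s (i + 1) := by
      intro i _
      have hinj : (↑(Finset.univ.filter fun p : Fin (kk d s i) × Fin (kk d s (i + 1)) =>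
          CC d s i p.1 p.2 ≠ 0) : Set (Fin (kk d s i) × Fin (kk d s (i + 1)))).InjOn
          (fun p => p.2) := by
        intro p hp p' hp' hpp
        simp only [Finset.coe_filter, Set.mem_setOf_eq] at hp hp'
        have h1 : (p.1 : ℕ) = (if i = 0 then 1 else 0) := by
          by_contra h
          exact hp.2 (by simp [CC, h])
        have h2 : (p'.1 : ℕ) = (if i = 0 then 1 else 0) := by
          by_contra h
          exact hp'.2 (by simp [CC, h])
        exact Prod.ext (Fin.ext (h1.trans h2.symm)) hpp
      calc (Finset.univ.filter fun p : Fin (kk d s i) × Fin (kk d s (i + 1)) =>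
            CC d s i p.1 p.2 ≠ 0).card
          ≤ (Finset.univ : Finset (Fin (kk d s (i + 1)))).card :=
            Finset.card_le_card_of_injOn (fun p => p.2) (fun p _ => Finset.mem_univ _) hinj
        _ = kk d s (i + 1) := by simp
    have hacard : ∀ i, i < d - 1 →
        (Finset.univ.filter fun j : Fin (kk d s (i + 1)) => aa d s q i j ≠ 0).card
          ≤ (if i + 1 = d - 1 then s else 0) := by
      intro i hi
      by_cases h : i + 1 = d - 1
      · rw [if_pos h]
        refine (Finset.card_filter_le _ _).trans ?_
        have : kk d s (i + 1) = s := by rw [hk1 i hi, if_pos h]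
        simp [this]
      · rw [if_neg h]
        have hz : ∀ j : Fin (kk d s (i + 1)), ¬ aa d s q i j ≠ 0 := by
          intro j
          simp [aa, h]
        rw [Finset.filter_false_of_mem (fun j _ => hz j)]
        simp
    have hcd : (Finset.univ.filter fun j : Fin (kk d s (d - 1)) => γ (j : ℕ) ≠ 0).card ≤ s := by
      refine (Finset.card_filter_le _ _).trans ?_
      simp [hkN]
    have hsum : (∑ i ∈ Finset.range (d - 1),
        (((Finset.univ.filter fun p : Fin (kk d s i) × Fin (kk d s (i + 1)) =>
            CC d s i p.1 p.2 ≠ 0).card)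
          + ((Finset.univ.filter fun j : Fin (kk d s (i + 1)) => aa d s q i j ≠ 0).card)))
        ≤ ∑ i ∈ Finset.range (d - 1),
            ((if i + 1 = d - 1 then s else 1) + (if i + 1 = d - 1 then s else 0)) := by
      refine Finset.sum_le_sum fun i hi => ?_
      rw [Finset.mem_range] at hi
      exact Nat.add_le_add ((hCcard i hi).trans (le_of_eq (hk1 i hi))) (hacard i hi)
    have hsum2 : ∑ i ∈ Finset.range (d - 1),
        ((if i + 1 = d - 1 then s else 1) + (if i + 1 = d - 1 then s else 0))
        = (d - 2) + 2 * s := by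
      have hd1 : d - 1 = (d - 2) + 1 := by omega
      rw [hd1, Finset.sum_range_succ]
      have e1 : ∀ i ∈ Finset.range (d - 2),
          ((if i + 1 = d - 2 + 1 then s else 1) + (if i + 1 = d - 2 + 1 then s else 0)) = 1 := by
        intro i hi
        rw [Finset.mem_range] at hi
        rw [if_neg (by omega), if_neg (by omega)]
      rw [Finset.sum_congr rfl e1, Finset.sum_const, Finset.card_range,
        if_pos rfl, if_pos rfl, smul_eq_mul]
      omega
    have hite : (if x' 0 ≠ 0 then 1 else 0) ≤ 1 := by split_ifs <;> omega
    have htot := Nat.add_le_add (Nat.add_le_add (hsum2 ▸ hsum) hcd) hite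
    refine htot.trans ?_
    obtain ⟨e, rfl⟩ : ∃ e, d = e + 2 := ⟨d - 2, by omega⟩
    have h1 : e ≤ s * e := Nat.le_mul_of_pos_left e hs
    have h2 : s * (e + 2 + 1) = s * e + 3 * s := by ring
    omega
  · -- output identity
    funext r
    have hBend : ∀ j : Fin (kk d s (d - 1)), BB d s q (d - 1) r j
        = max (((r : ℕ) : ℝ) - ((q (j : ℕ) : ℕ) : ℝ)) 0 := by
      intro j
      simp only [BB, Matrix.of_apply, if_neg (by omega : ¬ d - 1 = 0),
        if_neg (by omega : ¬ d - 1 < d - 1)]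
    have : (BB d s q (d - 1) *ᵥ (fun j => γ (j : ℕ))) r
        = ∑ t ∈ Finset.range s, max (((r : ℕ) : ℝ) - (q t : ℕ)) 0 * γ t := by
      rw [Matrix.mulVec, dotProduct]
      simp_rw [hBend]
      rw [Fin.sum_univ_eq_sum_range (fun t => max (((r : ℕ) : ℝ) - (q t : ℕ)) 0 * γ t) (kk d s (d-1)), hkN]
    show (BB d s q (d - 1) *ᵥ (fun j => γ (j : ℕ))) r + x' 0 = x r
    rw [this]
    have hr : (r : ℕ) ≤ 2 ^ (d - 1) := by have := r.isLt; omega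
    have := final (r : ℕ) hr
    rw [hx' (r : ℕ) r.isLt] at this
    rw [add_comm, ← this]
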